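/- If the nonzero real constants ν_1,...,ν_n are independent over the integers (i.e., Σ_j γ_j ν_j = 0 with γ_j ∈ ℤ implies all γ_j = 0), then for every odd k the restriction of D = Σ_j ν_j (q_j ∂/∂η_j − η_j ∂/∂q_j) to homogeneous polynomials of degree k has trivial kernel: D^{(k)} is injective. -/

import Mathlib

open MvPolynomial

section Aux

/-- diagonal operator `Σ_j (I ν_j) (z_j ∂z_j − w_j ∂w_j)` on the complexified side. -/
noncomputable def Del {n : ℕ} (ν : Fin n → ℝ) (q : MvPolynomial (Fin n ⊕ Fin n) ℂ) :
    MvPolynomial (Fin n ⊕ Fin n) ℂ :=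
  ∑ j : Fin n, ((Complex.I * ν j) • (X (Sum.inl j) * pderiv (Sum.inl j) q
    - X (Sum.inr j) * pderiv (Sum.inr j) q))

/-- substitution `q_j ↦ (z_j+w_j)/2`, `η_j ↦ -I(z_j-w_j)/2`. -/
noncomputable def sig {n : ℕ} : Fin n ⊕ Fin n → MvPolynomial (Fin n ⊕ Fin n) ℂ
  | Sum.inl j => (1/2 : ℂ) • (X (Sum.inl j) + X (Sum.inr j))
  | Sum.inr j => (-Complex.I/2 : ℂ) • (X (Sum.inl j) - X (Sum.inr j))

/-- inverse substitution `z_j ↦ q_j + I η_j`, `w_j ↦ q_j - I η_j`. -/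
noncomputable def tau {n : ℕ} : Fin n ⊕ Fin n → MvPolynomial (Fin n ⊕ Fin n) ℂ
  | Sum.inl j => X (Sum.inl j) + (Complex.I : ℂ) • X (Sum.inr j)
  | Sum.inr j => X (Sum.inl j) - (Complex.I : ℂ) • X (Sum.inr j)

/-- complexification map. -/
noncomputable def psi {n : ℕ} :
    MvPolynomial (Fin n ⊕ Fin n) ℝ →ₐ[ℝ] MvPolynomial (Fin n ⊕ Fin n) ℂ :=
  aeval sig

lemma tau_psi {n : ℕ} (p : MvPolynomial (Fin n ⊕ Fin n) ℝ) :
    aeval tau (psi p) = map (algebraMap ℝ ℂ) p := by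
  induction p using MvPolynomial.induction_on with
  | C a => simp [psi]
  | add p q hp hq => simp only [map_add, hp, hq]
  | mul_X p i hp =>
    rw [map_mul, map_mul, map_mul, hp, map_X]
    refine congrArg (fun x => map (algebraMap ℝ ℂ) p * x) ?_
    obtain (j | j) := i <;>
    · simp only [psi, aeval_X, sig, tau, map_smul, map_add, map_sub]
      match_scalars <;> ring_nf <;> simp [Complex.I_sq]

lemma psi_inj {n : ℕ} : Function.Injective (psi (n := n)) := by
  intro p q h
  have h2 := congrArg (aeval (R := ℂ) tau) h
  rw [tau_psi, tau_psi] at h2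
  exact MvPolynomial.map_injective _ (algebraMap ℝ ℂ).injective h2

end Aux

/-- `D = Σ_j ν_j (q_j ∂/∂η_j − η_j ∂/∂q_j)` (`Sum.inl j ↦ q_j`, `Sum.inr j ↦ η_j`). -/
noncomputable def Dop {n : ℕ} (ν : Fin n → ℝ) (p : MvPolynomial (Fin n ⊕ Fin n) ℝ) :
    MvPolynomial (Fin n ⊕ Fin n) ℝ :=
  ∑ j : Fin n, ν j • (X (Sum.inl j) * pderiv (Sum.inr j) p
    - X (Sum.inr j) * pderiv (Sum.inl j) p)

section Aux2

variable {n : ℕ} (ν : Fin n → ℝ)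

lemma Dop_add (p q) : Dop ν (p + q) = Dop ν p + Dop ν q := by
  simp only [Dop, map_add, mul_add, ← Finset.sum_add_distrib]
  exact Finset.sum_congr rfl fun j _ => by rw [← smul_add]; ring_nf

lemma Dop_C (a : ℝ) : Dop ν (C a) = 0 := by
  simp [Dop, pderiv_C]

lemma Dop_mul (p q) : Dop ν (p * q) = p * Dop ν q + q * Dop ν p := by
  simp only [Dop, Finset.mul_sum, ← Finset.sum_add_distrib]
  refine Finset.sum_congr rfl fun j _ => ?_
  simp only [pderiv_mul, smul_eq_C_mul]
  ring

lemma Del_add (p q) : Del ν (p + q) = Del ν p + Del ν q := by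
  simp only [Del, map_add, mul_add, ← Finset.sum_add_distrib]
  exact Finset.sum_congr rfl fun j _ => by rw [← smul_add]; ring_nf

lemma Del_C (a : ℂ) : Del ν (C a) = 0 := by
  simp [Del, pderiv_C]

lemma Del_mul (p q) : Del ν (p * q) = p * Del ν q + q * Del ν p := by
  simp only [Del, Finset.mul_sum, ← Finset.sum_add_distrib]
  refine Finset.sum_congr rfl fun j _ => ?_
  simp only [pderiv_mul, smul_eq_C_mul]
  ring

lemma Dop_X_inl (j : Fin n) : Dop ν (X (Sum.inl j)) = -(ν j • X (Sum.inr j)) := by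
  classical
  simp only [Dop, pderiv_X]
  rw [Finset.sum_eq_single j]
  · simp [Pi.single_apply]
  · intro b _ hb
    simp [Pi.single_apply, hb]
  · exact fun h => absurd (Finset.mem_univ j) h

lemma Dop_X_inr (j : Fin n) : Dop ν (X (Sum.inr j)) = ν j • X (Sum.inl j) := by
  classical
  simp only [Dop, pderiv_X]
  rw [Finset.sum_eq_single j]
  · simp [Pi.single_apply]
  · intro b _ hb
    simp [Pi.single_apply, hb]
  · exact fun h => absurd (Finset.mem_univ j) h

lemma key (i : Fin n ⊕ Fin n) : Del ν (psi (X i)) = psi (Dop ν (X i)) := by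
  classical
  obtain (j | j) := i
  · rw [Dop_X_inl, map_neg, map_smul]
    simp only [psi, aeval_X, sig]
    simp only [Del, Derivation.map_smul, map_add, map_sub, pderiv_X, smul_add, smul_sub]
    rw [Finset.sum_eq_single j]
    · simp only [Pi.single_apply, Sum.inl.injEq, Sum.inr.injEq, reduceCtorEq, if_true, if_false,
        ite_self, Algebra.mul_smul_comm, mul_one, mul_zero, smul_zero, add_zero, zero_add,
        sub_zero, zero_sub, eq_self_iff_true, mul_neg, neg_neg, smul_neg, sub_neg_eq_add]
      match_scalars <;> ring_nf <;> simp [Complex.I_sq] <;> ring_nf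
    · intro b _ hb
      simp [Pi.single_apply, hb]
    · exact fun h => absurd (Finset.mem_univ j) h
  · rw [Dop_X_inr, map_smul]
    simp only [psi, aeval_X, sig]
    simp only [Del, Derivation.map_smul, map_add, map_sub, pderiv_X, smul_add, smul_sub]
    rw [Finset.sum_eq_single j]
    · simp only [Pi.single_apply, Sum.inl.injEq, Sum.inr.injEq, reduceCtorEq, if_true, if_false,
        ite_self, Algebra.mul_smul_comm, mul_one, mul_zero, smul_zero, add_zero, zero_add,
        sub_zero, zero_sub, eq_self_iff_true, mul_neg, neg_neg, smul_neg, sub_neg_eq_add]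
      match_scalars <;> ring_nf <;> simp [Complex.I_sq] <;> ring_nf
    · intro b _ hb
      simp [Pi.single_apply, hb]
    · exact fun h => absurd (Finset.mem_univ j) h

lemma Dop_comm (p : MvPolynomial (Fin n ⊕ Fin n) ℝ) : psi (Dop ν p) = Del ν (psi p) := by
  induction p using MvPolynomial.induction_on with
  | C a =>
    rw [Dop_C, map_zero]
    have h : psi (C a : MvPolynomial (Fin n ⊕ Fin n) ℝ) = C ((a : ℂ)) := by
      simp [psi, algebraMap_eq]
    rw [h, Del_C]
  | add p q hp hq => rw [Dop_add, map_add, map_add, hp, hq, Del_add]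
  | mul_X p i hp =>
    rw [Dop_mul, map_add, map_mul, map_mul, map_mul, Del_mul, hp, key]

lemma X_mul_pderiv_monomial {σ : Type*} [DecidableEq σ] {R : Type*} [CommSemiring R]
    (i : σ) (d : σ →₀ ℕ) (c : R) :
    X i * pderiv i (monomial d c) = (d i : R) • monomial d c := by
  rw [pderiv_monomial]
  by_cases h : d i = 0
  · simp [h]
  · have hle : Finsupp.single i 1 ≤ d := by
      rwa [Finsupp.single_le_iff, Nat.one_le_iff_ne_zero]
    rw [← pow_one (X i : MvPolynomial σ R), ← monomial_single_add,
      add_tsub_cancel_of_le hle, smul_monomial, smul_eq_mul, mul_comm]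

lemma coeff_X_mul_pderiv {σ : Type*} [DecidableEq σ] {R : Type*} [CommSemiring R]
    (i : σ) (e : σ →₀ ℕ) (q : MvPolynomial σ R) :
    coeff e (X i * pderiv i q) = (e i : R) * coeff e q := by
  induction q using MvPolynomial.induction_on' with
  | monomial d c =>
    rw [_root_.X_mul_pderiv_monomial, coeff_smul, coeff_monomial]
    split
    · next h => subst h; simp
    · simp
  | add p q hp hq => simp [mul_add, map_add, hp, hq]

lemma coeff_Del (q : MvPolynomial (Fin n ⊕ Fin n) ℂ) (e : (Fin n ⊕ Fin n) →₀ ℕ) :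
    coeff e (Del ν q) =
      (∑ j, (Complex.I * ν j) * ((e (Sum.inl j) : ℂ) - (e (Sum.inr j) : ℂ))) * coeff e q := by
  classical
  simp only [Del]
  rw [coeff_sum]
  simp only [coeff_smul, coeff_sub, coeff_X_mul_pderiv, smul_eq_mul]
  rw [Finset.sum_mul]
  exact Finset.sum_congr rfl fun j _ => by ring

end Aux2

theorem stmt3 {n : ℕ} (ν : Fin n → ℝ) (hν : ∀ j, ν j ≠ 0)
    (hindep : ∀ γ : Fin n → ℤ, (∑ j, (γ j : ℝ) * ν j) = 0 → ∀ j, γ j = 0)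
    (k : ℕ) (hk : Odd k) :
    ∀ p : MvPolynomial (Fin n ⊕ Fin n) ℝ, p.IsHomogeneous k → Dop ν p = 0 → p = 0 := by
  intro p hp hD
  have hq : Del ν (psi p) = 0 := by rw [← Dop_comm, hD, map_zero]
  have hhom : (psi p).IsHomogeneous k := by
    have h1 : ∀ i : Fin n ⊕ Fin n, (sig (n := n) i).IsHomogeneous 1 := by
      rintro (j | j)
      · rw [show sig (Sum.inl j) = (1/2 : ℂ) • (X (Sum.inl j) + X (Sum.inr j)) from rfl,
          smul_eq_C_mul]
        exact ((isHomogeneous_X ℂ _).add (isHomogeneous_X ℂ _)).C_mul _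
      · rw [show sig (Sum.inr j) = (-Complex.I/2 : ℂ) • (X (Sum.inl j) - X (Sum.inr j)) from rfl,
          smul_eq_C_mul]
        exact ((isHomogeneous_X ℂ _).sub (isHomogeneous_X ℂ _)).C_mul _
    have := hp.aeval sig h1
    simpa [psi] using this
  have hpsi0 : psi p = 0 := by
    by_contra hne
    obtain ⟨d, hd⟩ := MvPolynomial.support_nonempty.2 hne
    have hc : coeff d (psi p) ≠ 0 := MvPolynomial.mem_support_iff.mp hd
    have h0 : (∑ j, (Complex.I * ν j) * ((d (Sum.inl j) : ℂ) - (d (Sum.inr j) : ℂ)))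
        * coeff d (psi p) = 0 := by
      rw [← coeff_Del, hq, coeff_zero]
    have hlam : (∑ j, (Complex.I * ν j) * ((d (Sum.inl j) : ℂ) - (d (Sum.inr j) : ℂ))) = 0 :=
      (mul_eq_zero.mp h0).resolve_right hc
    set γ : Fin n → ℤ := fun j => (d (Sum.inl j) : ℤ) - (d (Sum.inr j) : ℤ) with hγ
    have hre : (∑ j, (γ j : ℝ) * ν j) = 0 := by
      have h1 : Complex.I * ((∑ j, (γ j : ℝ) * ν j : ℝ) : ℂ) = 0 := by
        rw [← hlam]
        push_cast [Finset.mul_sum]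
        exact Finset.sum_congr rfl fun j _ => by push_cast [hγ]; ring
      have h2 := (mul_eq_zero.mp h1).resolve_left Complex.I_ne_zero
      exact_mod_cast h2
    have hγ0 := hindep γ hre
    have heq : ∀ j, d (Sum.inl j) = d (Sum.inr j) := by
      intro j
      have := hγ0 j
      simp only [hγ, sub_eq_zero] at this
      exact_mod_cast this
    have hdeg : Finsupp.degree d = k := by
      rw [Finsupp.degree_eq_weight_one]
      exact hhom hc
    have hsum : ∑ i : Fin n ⊕ Fin n, d i = k := by
      rw [← hdeg, Finsupp.degree]
      exact (Finset.sum_subset (Finset.subset_univ _)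
        (fun i _ hi => Finsupp.notMem_support_iff.mp hi)).symm
    rw [Fintype.sum_sum_type] at hsum
    have h2 : 2 * (∑ j : Fin n, d (Sum.inl j)) = k := by
      rw [two_mul, ← hsum]
      congr 1
      exact Finset.sum_congr rfl fun j _ => heq j
    rw [Nat.odd_iff] at hk
    omega
  have : psi p = psi 0 := by rw [hpsi0, map_zero]
  exact psi_inj this
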